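/- In any classical Cartan domain ℛ, every weak m-extremal map f : 𝔻 → ℛ (with respect to some m distinct points) is in fact m-extremal, i.e. it is weak m-extremal with respect to every choice of m distinct points in 𝔻. -/

import Mathlib

open Complex Metric Set

noncomputable section

/-- The open unit disc in `ℂ`. -/
def 𝔻 : Set ℂ := Metric.ball 0 1

/-- `B` is a Blaschke product of degree `m` on the unit disc: a unimodular constant
times a product of `m` Möbius factors. -/
def IsBlaschke (m : ℕ) (B : ℂ → ℂ) : Prop :=
  ∃ (ω : ℂ) (a : Fin m → ℂ), ‖ω‖ = 1 ∧ (∀ j, a j ∈ 𝔻) ∧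
    ∀ z ∈ 𝔻, B z = ω * ∏ j, (a j - z) / (1 - (starRingEnd ℂ) (a j) * z)

variable {E : Type*} [NormedAddCommGroup E] [NormedSpace ℂ E]

/-- The interpolation data `lam j ↦ f (lam j)` is extremally solvable (through `f`):
no map holomorphic on a neighbourhood of the closed unit disc with values in `D`
interpolates `f` at the points `lam j`. -/
def ExtSolv (D : Set E) {m : ℕ} (lam : Fin m → ℂ) (f : ℂ → E) : Prop :=
  ¬ ∃ (U : Set ℂ) (g : ℂ → E), IsOpen U ∧ Metric.closedBall (0 : ℂ) 1 ⊆ U ∧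
      DifferentiableOn ℂ g U ∧ (∀ z ∈ U, g z ∈ D) ∧ ∀ j, g (lam j) = f (lam j)

/-- `f : 𝔻 → D` is a weak `m`-extremal with respect to the distinct points `lam`. -/
def IsWeakExtremal (D : Set E) {m : ℕ} (lam : Fin m → ℂ) (f : ℂ → E) : Prop :=
  DifferentiableOn ℂ f 𝔻 ∧ (∀ z ∈ 𝔻, f z ∈ D) ∧ ExtSolv D lam f

/-- `f : 𝔻 → D` is `m`-extremal: for all choices of `m` distinct points of `𝔻` the
corresponding interpolation data is extremally solvable. -/
def IsMExtremal (D : Set E) (m : ℕ) (f : ℂ → E) : Prop :=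
  DifferentiableOn ℂ f 𝔻 ∧ (∀ z ∈ 𝔻, f z ∈ D) ∧
    ∀ lam : Fin m → ℂ, Function.Injective lam → (∀ j, lam j ∈ 𝔻) → ExtSolv D lam f

/-- The Minkowski functional of a set `D`. -/
def mink (D : Set E) (z : E) : ℝ := sInf {t : ℝ | 0 < t ∧ ((t : ℂ))⁻¹ • z ∈ D}

/-- `φ` is a holomorphic automorphism of `D`. -/
def IsAutomorphismOf (D : Set E) (φ : E → E) : Prop :=
  DifferentiableOn ℂ φ D ∧ Set.MapsTo φ D D ∧
    ∃ ψ : E → E, DifferentiableOn ℂ ψ D ∧ Set.MapsTo ψ D D ∧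
      (∀ z ∈ D, ψ (φ z) = z) ∧ (∀ z ∈ D, φ (ψ z) = z)

/-- The group of holomorphic automorphisms of `D` acts transitively. -/
def Homogeneous (D : Set E) : Prop :=
  ∀ z ∈ D, ∀ w ∈ D, ∃ φ : E → E, IsAutomorphismOf D φ ∧ φ z = w

/-- `f` is an `m`-complex geodesic of `D`: there is `F ∈ 𝒪(D, 𝔻)` such that `F ∘ f` is a
non-constant Blaschke product of degree at most `m - 1`. -/
def IsComplexGeodesicOfOrder (D : Set E) (m : ℕ) (f : ℂ → E) : Prop :=
  DifferentiableOn ℂ f 𝔻 ∧ (∀ z ∈ 𝔻, f z ∈ D) ∧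
    ∃ F : E → ℂ, DifferentiableOn ℂ F D ∧ (∀ z ∈ D, F z ∈ 𝔻) ∧
      ∃ k : ℕ, 1 ≤ k ∧ k ≤ m - 1 ∧ ∃ B : ℂ → ℂ, IsBlaschke k B ∧
        ∀ z ∈ 𝔻, F (f z) = B z

/-- The sub-mean-value property on circles, for a real function on a subset of `ℂ`. -/
def SubmeanOn (u : ℂ → ℝ) (S : Set ℂ) : Prop :=
  ∀ (c : ℂ) (r : ℝ), 0 < r → Metric.closedBall c r ⊆ S →
    u c ≤ (2 * Real.pi)⁻¹ * ∫ θ in (0:ℝ)..(2 * Real.pi), u (c + r * Complex.exp (θ * Complex.I))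

/-- `u` is plurisubharmonic on `D`: upper semicontinuous and submean on every complex line. -/
def PlurisubharmonicOn (u : E → ℝ) (D : Set E) : Prop :=
  UpperSemicontinuousOn u D ∧
    ∀ (z v : E), SubmeanOn (fun w : ℂ => u (z + w • v)) {w : ℂ | z + w • v ∈ D}

/-- Hartogs pseudoconvexity: `- log dist(·, ∂D)` is plurisubharmonic on `D`. -/
def IsPseudoconvex (D : Set E) : Prop :=
  PlurisubharmonicOn (fun z => - Real.log (Metric.infDist z Dᶜ)) D



namespace Stmt6Aux

open Function


/-- Möbius factor. -/
def mob (α z : ℂ) : ℂ := (α - z) / (1 - (starRingEnd ℂ) α * z)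

theorem mob_den_ne {α z : ℂ} (hα : ‖α‖ < 1) (hz : ‖z‖ ≤ 1) :
    1 - (starRingEnd ℂ) α * z ≠ 0 := by
  intro h
  have h1 : (starRingEnd ℂ) α * z = 1 := by linear_combination -h
  have h2 := congrArg norm h1
  rw [norm_mul, norm_one, RCLike.norm_conj] at h2
  nlinarith [norm_nonneg z, norm_nonneg α]

theorem mob_normSq (α z : ℂ) :
    Complex.normSq (1 - (starRingEnd ℂ) α * z) - Complex.normSq (α - z)
      = (1 - Complex.normSq α) * (1 - Complex.normSq z) := by
  simp only [Complex.normSq_apply, Complex.sub_re, Complex.sub_im, Complex.one_re, Complex.one_im,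
    Complex.mul_re, Complex.mul_im, Complex.conj_re, Complex.conj_im]
  ring

theorem normSq_eq_norm_sq (z : ℂ) : Complex.normSq z = ‖z‖ ^ 2 := by
  rw [Complex.normSq_eq_norm_sq]

theorem mob_norm_le {α z : ℂ} (hα : ‖α‖ < 1) (hz : ‖z‖ ≤ 1) : ‖mob α z‖ ≤ 1 := by
  have hden := mob_den_ne hα hz
  rw [mob, norm_div, div_le_one (norm_pos_iff.2 hden)]
  have hk := mob_normSq α z
  rw [normSq_eq_norm_sq, normSq_eq_norm_sq, normSq_eq_norm_sq, normSq_eq_norm_sq] at hk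
  have hfac : 0 ≤ (1 - ‖α‖ ^ 2) * (1 - ‖z‖ ^ 2) :=
    mul_nonneg (by nlinarith [norm_nonneg α]) (by nlinarith [norm_nonneg z])
  have h2 : ‖α - z‖ ^ 2 ≤ ‖1 - (starRingEnd ℂ) α * z‖ ^ 2 := by linarith
  have := Real.sqrt_le_sqrt h2
  rwa [Real.sqrt_sq (norm_nonneg _), Real.sqrt_sq (norm_nonneg _)] at this

theorem mob_norm_lt {α z : ℂ} (hα : ‖α‖ < 1) (hz : ‖z‖ < 1) : ‖mob α z‖ < 1 := by
  have hden := mob_den_ne hα hz.le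
  rw [mob, norm_div, div_lt_one (norm_pos_iff.2 hden)]
  have hk := mob_normSq α z
  rw [normSq_eq_norm_sq, normSq_eq_norm_sq, normSq_eq_norm_sq, normSq_eq_norm_sq] at hk
  have hfac : 0 < (1 - ‖α‖ ^ 2) * (1 - ‖z‖ ^ 2) :=
    mul_pos (by nlinarith [norm_nonneg α]) (by nlinarith [norm_nonneg z])
  have h2 : ‖α - z‖ ^ 2 < ‖1 - (starRingEnd ℂ) α * z‖ ^ 2 := by linarith
  have := Real.sqrt_lt_sqrt (sq_nonneg _) h2
  rwa [Real.sqrt_sq (norm_nonneg _), Real.sqrt_sq (norm_nonneg _)] at this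

theorem mob_zero (α : ℂ) : mob α 0 = α := by simp [mob]

theorem mob_self (α : ℂ) : mob α α = 0 := by simp [mob]

theorem mob_mob {α z : ℂ} (hα : ‖α‖ < 1) (hz : ‖z‖ ≤ 1) : mob α (mob α z) = z := by
  have hd : 1 - (starRingEnd ℂ) α * z ≠ 0 := mob_den_ne hα hz
  have hαα : 1 - (starRingEnd ℂ) α * α ≠ 0 := mob_den_ne hα hα.le
  have h1 : α - (α - z) / (1 - (starRingEnd ℂ) α * z)
      = (z * (1 - (starRingEnd ℂ) α * α)) / (1 - (starRingEnd ℂ) α * z) := by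
    rw [eq_div_iff hd, sub_mul, div_mul_cancel₀ _ hd]
    ring
  have h2 : 1 - (starRingEnd ℂ) α * ((α - z) / (1 - (starRingEnd ℂ) α * z))
      = (1 - (starRingEnd ℂ) α * α) / (1 - (starRingEnd ℂ) α * z) := by
    field_simp
    ring
  rw [mob, mob, h1, h2, div_div_div_cancel_right₀ (hc := hd), mul_div_assoc, div_self hαα,
    mul_one]

theorem mob_inj {α x y : ℂ} (hα : ‖α‖ < 1) (hx : ‖x‖ ≤ 1) (hy : ‖y‖ ≤ 1)
    (h : mob α x = mob α y) : x = y := by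
  rw [← mob_mob hα hx, h, mob_mob hα hy]

def mobΩ (α : ℂ) : Set ℂ := {z | 1 - (starRingEnd ℂ) α * z ≠ 0}

theorem isOpen_mobΩ (α : ℂ) : IsOpen (mobΩ α) := by
  have : mobΩ α = (fun z => 1 - (starRingEnd ℂ) α * z) ⁻¹' {(0:ℂ)}ᶜ := by
    ext z; simp [mobΩ]
  rw [this]
  exact isOpen_compl_singleton.preimage (continuous_const.sub (continuous_const.mul continuous_id))

theorem mob_differentiableOn (α : ℂ) : DifferentiableOn ℂ (mob α) (mobΩ α) := by
  have : DifferentiableOn ℂ (fun z => (α - z) / (1 - (starRingEnd ℂ) α * z)) (mobΩ α) :=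
    DifferentiableOn.div ((differentiableOn_const α).sub differentiableOn_id)
      ((differentiableOn_const 1).sub ((differentiableOn_const _).mul differentiableOn_id))
      (fun z hz => hz)
  exact this

/-- Solvability of the interpolation problem `lam j ↦ v j` by a map holomorphic on a
neighbourhood of the closed disc with values in `D`. -/
def Solv (D : Set E) {m : ℕ} (lam : Fin m → ℂ) (v : Fin m → E) : Prop :=
  ∃ (U : Set ℂ) (g : ℂ → E), IsOpen U ∧ Metric.closedBall (0 : ℂ) 1 ⊆ U ∧
      DifferentiableOn ℂ g U ∧ (∀ z ∈ U, g z ∈ D) ∧ ∀ j, g (lam j) = v j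

theorem solv_congr {D : Set E} {m : ℕ} {lam lam' : Fin m → ℂ} {v v' : Fin m → E}
    (hl : ∀ j, lam j = lam' j) (hv : ∀ j, v j = v' j) (h : Solv D lam v) : Solv D lam' v' := by
  obtain ⟨U, g, hUo, hUc, hgd, hgm, hgv⟩ := h
  exact ⟨U, g, hUo, hUc, hgd, hgm, fun j => by rw [← hl j, ← hv j]; exact hgv j⟩

theorem solv_reindex {D : Set E} {m k : ℕ} {lam : Fin m → ℂ} {v : Fin m → E}
    (e : Fin k → Fin m) (h : Solv D lam v) : Solv D (lam ∘ e) (v ∘ e) := by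
  obtain ⟨U, g, hUo, hUc, hgd, hgm, hgv⟩ := h
  exact ⟨U, g, hUo, hUc, hgd, hgm, fun j => hgv (e j)⟩

theorem solv_post {D : Set E} {m : ℕ} {lam : Fin m → ℂ} {v : Fin m → E} {Φ : E → E}
    (hΦd : DifferentiableOn ℂ Φ D) (hΦm : MapsTo Φ D D) (h : Solv D lam v) :
    Solv D lam (fun j => Φ (v j)) := by
  obtain ⟨U, g, hUo, hUc, hgd, hgm, hgv⟩ := h
  exact ⟨U, fun z => Φ (g z), hUo, hUc, hΦd.comp hgd (fun z hz => hgm z hz),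
    fun z hz => hΦm (hgm z hz), fun j => by show Φ (g (lam j)) = Φ (v j); rw [hgv j]⟩

theorem solv_mob {D : Set E} {m : ℕ} {lam : Fin m → ℂ} {v : Fin m → E} {α : ℂ}
    (hα : ‖α‖ < 1) (hlam : ∀ j, ‖lam j‖ < 1) (h : Solv D lam v) :
    Solv D (fun j => mob α (lam j)) v := by
  obtain ⟨U, g, hUo, hUc, hgd, hgm, hgv⟩ := h
  refine ⟨mobΩ α ∩ mob α ⁻¹' U, fun z => g (mob α z), ?_, ?_, ?_, ?_, ?_⟩
  · exact (mob_differentiableOn α).continuousOn.isOpen_inter_preimage (isOpen_mobΩ α) hUo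
  · intro z hz
    have hz1 : ‖z‖ ≤ 1 := mem_closedBall_zero_iff.1 hz
    exact ⟨mob_den_ne hα hz1, hUc (mem_closedBall_zero_iff.2 (mob_norm_le hα hz1))⟩
  · exact hgd.comp ((mob_differentiableOn α).mono inter_subset_left) (fun z hz => hz.2)
  · exact fun z hz => hgm _ hz.2
  · intro j
    have hm : mob α (mob α (lam j)) = lam j := mob_mob hα (hlam j).le
    show g (mob α (mob α (lam j))) = v j
    rw [hm]
    exact hgv j

theorem zero_mem_of_balanced {R : Set E} (hbal : Balanced ℂ R) {x : E} (hx : x ∈ R) :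
    (0 : E) ∈ R := by
  have h01 : ‖(0:ℂ)‖ ≤ 1 := by simp
  have := balanced_iff_smul_mem.1 hbal h01 hx
  simpa using this

/-- Separation of a point from an open convex balanced set, with complexified functional. -/
theorem sep {R : Set E} (hRo : IsOpen R) (hconv : Convex ℝ R) (hbal : Balanced ℂ R)
    (h0 : (0 : E) ∈ R) {x : E} (hx : x ∉ R) :
    ∃ (L : E →L[ℂ] ℂ) (c₀ : ℝ), 0 < c₀ ∧ (∀ y ∈ R, ‖L y‖ ≤ c₀) ∧ c₀ ≤ (L x).re := by
  obtain ⟨fr, hfr⟩ := geometric_hahn_banach_open_point hconv hRo hx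
  refine ⟨fr.extendTo𝕜', fr x, ?_, ?_, ?_⟩
  · have := hfr 0 h0
    simpa using this
  · intro y hy
    rcases eq_or_ne (fr.extendTo𝕜' y : ℂ) 0 with h | h
    · rw [h, norm_zero]
      have := hfr 0 h0
      simp at this
      linarith
    · set z : ℂ := fr.extendTo𝕜' y with hz
      have hcn : ‖(starRingEnd ℂ) z / (‖z‖ : ℂ)‖ = 1 := by
        rw [norm_div, RCLike.norm_conj, Complex.norm_real, norm_norm]
        exact div_self (norm_ne_zero_iff.2 h)
      have hmem : ((starRingEnd ℂ) z / (‖z‖ : ℂ)) • y ∈ R :=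
        balanced_iff_smul_mem.1 hbal hcn.le hy
      have hval : (fr.extendTo𝕜' (((starRingEnd ℂ) z / (‖z‖ : ℂ)) • y) : ℂ) = (‖z‖ : ℂ) := by
        rw [map_smul, smul_eq_mul, ← hz, div_mul_eq_mul_div, Complex.conj_mul']
        rw [sq, mul_div_assoc, div_self (by exact_mod_cast norm_ne_zero_iff.2 h), mul_one]
      have hlt := hfr _ hmem
      have hre : (fr.extendTo𝕜' (((starRingEnd ℂ) z / (‖z‖ : ℂ)) • y) : ℂ).re
          = fr (((starRingEnd ℂ) z / (‖z‖ : ℂ)) • y) :=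
        fr.toLinearMap.extendTo𝕜'_apply_re (𝕜 := ℂ) _
      rw [hval] at hre
      simp only [Complex.ofReal_re] at hre
      linarith
  · have hre : (fr.extendTo𝕜' x : ℂ).re = fr x := fr.toLinearMap.extendTo𝕜'_apply_re (𝕜 := ℂ) x
    rw [hre]

/-- Quantitative Schwarz bound via `dslope`. -/
theorem schwarz_bound {g : ℂ → ℂ} {r C : ℝ} (hr : 0 < r)
    (hd : DifferentiableOn ℂ g (ball (0:ℂ) r)) (h0 : g 0 = 0)
    (hb : ∀ z ∈ ball (0:ℂ) r, ‖g z‖ ≤ C) {z : ℂ} (hz : z ∈ ball (0:ℂ) r) :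
    ‖dslope g 0 z‖ ≤ C / r := by
  have hC : 0 ≤ C := by
    have := hb 0 (mem_ball_self hr)
    rw [h0, norm_zero] at this
    exact this
  refine le_of_forall_pos_le_add fun ε hε => ?_
  have hmaps : MapsTo g (ball (0:ℂ) r) (ball (g 0) (C + ε * r)) := by
    intro w hw
    rw [h0, mem_ball_zero_iff]
    have := hb w hw
    nlinarith
  have h := Complex.norm_dslope_le_div_of_mapsTo_ball hd (hmaps.mono_right ball_subset_closedBall) hz
  calc ‖dslope g 0 z‖ ≤ (C + ε * r) / r := h
    _ = C / r + ε := by field_simp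

theorem mem_disc {z : ℂ} : z ∈ 𝔻 ↔ ‖z‖ < 1 := mem_ball_zero_iff

theorem const_of_max {u : ℂ → ℂ} (hud : DifferentiableOn ℂ u 𝔻) {c₀ : ℝ}
    (hub : ∀ z ∈ 𝔻, ‖u z‖ ≤ c₀) {σ : ℂ} (hσ : σ ∈ 𝔻) (hmax : c₀ ≤ ‖u σ‖) :
    ∀ z ∈ 𝔻, u z = u σ := by
  have hmx : IsMaxOn (norm ∘ u) 𝔻 σ := by
    intro z hz
    exact (hub z hz).trans hmax
  have h := Complex.eqOn_of_isPreconnected_of_isMaxOn_norm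
    ((convex_ball (0:ℂ) 1).isPreconnected) isOpen_ball hud hσ hmx
  exact fun z hz => h hz

theorem exists_radius {U : Set ℂ} (hU : IsOpen U) (hsub : Metric.closedBall (0:ℂ) 1 ⊆ U) :
    ∃ r : ℝ, 1 < r ∧ ball (0:ℂ) r ⊆ U := by
  obtain ⟨δ, hδ, hth⟩ := (isCompact_closedBall (0:ℂ) 1).exists_thickening_subset_open hU hsub
  refine ⟨1 + δ, by linarith, fun z hz => hth ?_⟩
  rw [Metric.mem_thickening_iff]
  rw [mem_ball_zero_iff] at hz
  by_cases h1 : ‖z‖ ≤ 1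
  · exact ⟨z, mem_closedBall_zero_iff.2 h1, by simpa using hδ⟩
  · push_neg at h1
    refine ⟨‖z‖⁻¹ • z, ?_, ?_⟩
    · rw [mem_closedBall_zero_iff, norm_smul, norm_inv, norm_norm,
        inv_mul_cancel₀ (by positivity)]
    · have hz0 : z ≠ 0 := by intro h; rw [h, norm_zero] at h1; linarith
      have : z - ‖z‖⁻¹ • z = ((1 - ‖z‖⁻¹ : ℝ)) • z := by
        rw [sub_smul, one_smul]
      rw [dist_eq_norm, this, norm_smul, Real.norm_eq_abs,
        _root_.abs_of_nonneg (by rw [sub_nonneg]; exact inv_le_one_of_one_le₀ h1.le)]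
      have hn : (1 - ‖z‖⁻¹) * ‖z‖ = ‖z‖ - 1 := by
        rw [sub_mul, one_mul, inv_mul_cancel₀ (ne_of_gt (by linarith : (0:ℝ) < ‖z‖))]
      rw [hn]
      linarith

theorem dslope_diffOn [CompleteSpace E] {F : ℂ → E} {U : Set ℂ} (hU : IsOpen U)
    (h0 : (0:ℂ) ∈ U) (hd : DifferentiableOn ℂ F U) :
    DifferentiableOn ℂ (dslope F 0) U := by
  intro z hz
  rcases eq_or_ne z 0 with rfl | hne
  · obtain ⟨p, hp⟩ := hd.analyticAt (hU.mem_nhds h0)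
    exact hp.has_fpower_series_dslope_fslope.analyticAt.differentiableAt.differentiableWithinAt
  · exact ((differentiableAt_dslope_of_ne hne).2
      ((hd z hz).differentiableAt (hU.mem_nhds hz))).differentiableWithinAt

theorem solv_extend_zero {D : Set E} (hDo : IsOpen D) (hbal : Balanced ℂ D)
    {k : ℕ} {nodes : Fin k → ℂ} {w : Fin k → E} (hs : Solv D nodes w)
    {m : ℕ} {lam : Fin m → ℂ} {v : Fin m → E}
    (h0 : ∀ i, lam i = 0 → v i = 0) (hmem : ∀ i, ‖lam i‖ < 1)
    (hmatch : ∀ i, lam i ≠ 0 → ∃ j, nodes j = lam i ∧ v i = lam i • w j) :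
    Solv D lam v := by
  obtain ⟨U, G, hUo, hUc, hGd, hGm, hGv⟩ := hs
  obtain ⟨r, hr, hrU⟩ := exists_radius hUo hUc
  set ρ : ℝ := (1 + r) / 2 with hρ
  have hρ1 : 1 < ρ := by rw [hρ]; linarith
  have hρr : ρ < r := by rw [hρ]; linarith
  have hcb : Metric.closedBall (0:ℂ) ρ ⊆ U := fun z hz =>
    hrU (mem_ball_zero_iff.2 (lt_of_le_of_lt (mem_closedBall_zero_iff.1 hz) hρr))
  have hK : IsCompact (G '' Metric.closedBall (0:ℂ) ρ) :=
    (isCompact_closedBall _ _).image_of_continuousOn (hGd.continuousOn.mono hcb)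
  have hKD : G '' Metric.closedBall (0:ℂ) ρ ⊆ D := by
    rintro y ⟨z, hz, rfl⟩
    exact hGm z (hcb hz)
  obtain ⟨η, hη, hth⟩ := hK.exists_thickening_subset_open hDo hKD
  obtain ⟨M, hM⟩ := isBounded_iff_forall_norm_le.1 hK.isBounded
  have hM0 : (0:ℝ) ≤ M + 1 := by
    have := hM (G 0) ⟨0, by simp [mem_closedBall_zero_iff]; linarith, rfl⟩
    have h2 := norm_nonneg (G 0)
    linarith
  set t₀ : ℝ := 1 + η / (2 * (M + 1)) with ht₀
  have hMpos : (0:ℝ) < M + 1 := by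
    have := hM (G 0) ⟨0, by simp [mem_closedBall_zero_iff]; linarith, rfl⟩
    have h2 := norm_nonneg (G 0)
    linarith
  have ht₀1 : 1 < t₀ := by
    rw [ht₀]
    have : 0 < η / (2 * (M + 1)) := by positivity
    linarith
  have hsm : ∀ (c : ℂ), ∀ y ∈ G '' Metric.closedBall (0:ℂ) ρ, ‖c‖ ≤ t₀ → c • y ∈ D := by
    intro c y hy hc
    have hyM : ‖y‖ ≤ M := hM y hy
    have hty : ((t₀ : ℂ)) • y ∈ D := by
      apply hth
      rw [Metric.mem_thickening_iff]
      refine ⟨y, hy, ?_⟩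
      have heq : ((t₀:ℂ)) • y - y = (((t₀ - 1 : ℝ)):ℂ) • y := by
        push_cast
        rw [sub_smul, one_smul]
      rw [dist_eq_norm, heq, norm_smul, Complex.norm_real, Real.norm_eq_abs,
        _root_.abs_of_nonneg (by linarith)]
      have ht1 : t₀ - 1 = η / (2 * (M + 1)) := by rw [ht₀]; ring
      rw [ht1]
      calc η / (2 * (M + 1)) * ‖y‖ ≤ η / (2 * (M + 1)) * (M + 1) := by
            apply mul_le_mul_of_nonneg_left (by linarith) (by positivity)
        _ = η / 2 := by field_simp
        _ < η := by linarith
    have ht₀0 : (t₀ : ℂ) ≠ 0 := by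
      exact_mod_cast (by linarith : t₀ ≠ 0)
    have hc1 : ‖c / (t₀:ℂ)‖ ≤ 1 := by
      rw [norm_div, Complex.norm_real, Real.norm_eq_abs, _root_.abs_of_nonneg (by linarith)]
      rw [div_le_one (by linarith)]
      exact hc
    have hcy : c • y = (c / (t₀:ℂ)) • ((t₀:ℂ) • y) := by
      rw [smul_smul, div_mul_cancel₀ _ ht₀0]
    rw [hcy]
    exact balanced_iff_smul_mem.1 hbal hc1 hty
  refine ⟨ball (0:ℂ) (min ρ t₀), fun z => z • G z, isOpen_ball, ?_, ?_, ?_, ?_⟩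
  · intro z hz
    rw [mem_ball_zero_iff]
    exact lt_of_le_of_lt (mem_closedBall_zero_iff.1 hz) (lt_min hρ1 ht₀1)
  · have hsub : ball (0:ℂ) (min ρ t₀) ⊆ U := fun z hz => hcb (mem_closedBall_zero_iff.2
      (le_trans (mem_ball_zero_iff.1 hz).le (min_le_left _ _)))
    exact DifferentiableOn.smul differentiableOn_id (hGd.mono hsub)
  · intro z hz
    rw [mem_ball_zero_iff] at hz
    refine hsm z (G z) ⟨z, mem_closedBall_zero_iff.2 (le_trans hz.le (min_le_left _ _)), rfl⟩
      (le_trans hz.le (min_le_right _ _))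
  · intro i
    by_cases hi : lam i = 0
    · show lam i • G (lam i) = v i
      rw [hi, h0 i hi, zero_smul]
    · obtain ⟨j, hj1, hj2⟩ := hmatch i hi
      show lam i • G (lam i) = v i
      rw [hj2, ← hj1, hGv j]

theorem re_le_norm (z : ℂ) : z.re ≤ ‖z‖ := by
  exact Complex.re_le_norm z

theorem solv_dslope [CompleteSpace E] {D : Set E} (hDo : IsOpen D) (hconv : Convex ℝ D)
    (hbal : Balanced ℂ D) (h0D : (0:E) ∈ D)
    {m : ℕ} {lam : Fin m → ℂ} {v : Fin m → E} (hs : Solv D lam v)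
    {i₀ : Fin m} (hl0 : lam i₀ = 0) (hv0 : v i₀ = 0)
    {k : ℕ} {nodes : Fin k → ℂ} {w : Fin k → E}
    (hmatch : ∀ j, nodes j ≠ 0 ∧ ‖nodes j‖ < 1 ∧ ∃ i, lam i = nodes j ∧ w j = (nodes j)⁻¹ • v i) :
    Solv D nodes w := by
  obtain ⟨U, G, hUo, hUc, hGd, hGm, hGv⟩ := hs
  obtain ⟨r, hr, hrU⟩ := exists_radius hUo hUc
  have hG0 : G 0 = 0 := by
    have := hGv i₀
    rwa [hl0, hv0] at this
  have hGd' : DifferentiableOn ℂ G (ball (0:ℂ) r) := hGd.mono hrU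
  have h0r : (0:ℂ) ∈ ball (0:ℂ) r := mem_ball_self (by linarith)
  have hG₁d : DifferentiableOn ℂ (dslope G 0) (ball (0:ℂ) r) := dslope_diffOn isOpen_ball h0r hGd'
  have hGmem : ∀ z ∈ ball (0:ℂ) r, dslope G 0 z ∈ D := by
    intro z hz
    by_contra hnot
    obtain ⟨L, c₀, hc₀, hLb, hLre⟩ := sep hDo hconv hbal h0D hnot
    have hud : DifferentiableOn ℂ (⇑L ∘ G) (ball (0:ℂ) r) :=
      L.differentiable.comp_differentiableOn hGd'
    have hu0 : (⇑L ∘ G) 0 = 0 := by simp [Function.comp, hG0]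
    have hub : ∀ t ∈ ball (0:ℂ) r, ‖(⇑L ∘ G) t‖ ≤ c₀ := fun t ht => hLb _ (hGm t (hrU ht))
    have hsch := schwarz_bound (by linarith : (0:ℝ) < r) hud hu0 hub hz
    have hcomp : dslope (⇑L ∘ G) 0 z = L (dslope G 0 z) :=
      L.dslope_comp G 0 z (fun _ => (hGd' 0 h0r).differentiableAt (isOpen_ball.mem_nhds h0r))
    rw [hcomp] at hsch
    have h1 : c₀ ≤ ‖L (dslope G 0 z)‖ := hLre.trans (re_le_norm _)
    have h2 : c₀ / r < c₀ := div_lt_self hc₀ hr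
    linarith [h1.trans hsch]
  refine ⟨ball (0:ℂ) r, dslope G 0, isOpen_ball, ?_, hG₁d, hGmem, ?_⟩
  · exact fun z hz => mem_ball_zero_iff.2 (lt_of_le_of_lt (mem_closedBall_zero_iff.1 hz) hr)
  · intro j
    obtain ⟨hne, _, i, hi, hwj⟩ := hmatch j
    rw [hwj, dslope_of_ne _ hne, slope_def_module, sub_zero, hG0, sub_zero, ← hi, hGv i]

/-- The rigidity ("case outside") kill: if the divided difference of `F` exits `R` somewhere,
no closed-disc interpolant matching `F` at `0` and one more point exists. -/
theorem case_out [CompleteSpace E] {R : Set E} (hRo : IsOpen R) (hconv : Convex ℝ R)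
    (hbal : Balanced ℂ R) (h0R : (0:E) ∈ R)
    {F : ℂ → E} (hFd : DifferentiableOn ℂ F 𝔻) (hFm : ∀ z ∈ 𝔻, F z ∈ R) (hF0 : F 0 = 0)
    {σ : ℂ} (hσD : σ ∈ 𝔻) (hσR : dslope F 0 σ ∉ R)
    {U₀ : Set ℂ} {G₀ : ℂ → E} (hU₀o : IsOpen U₀) (hU₀c : Metric.closedBall (0:ℂ) 1 ⊆ U₀)
    (hG₀d : DifferentiableOn ℂ G₀ U₀) (hG₀m : ∀ z ∈ U₀, G₀ z ∈ R)
    {τ : ℂ} (hτD : τ ∈ 𝔻) (hτne : τ ≠ 0) (hG₀0 : G₀ 0 = 0) (hG₀τ : G₀ τ = F τ) : False := by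
  obtain ⟨L, c₀, hc₀, hLb, hLre⟩ := sep hRo hconv hbal h0R hσR
  have h0D : (0:ℂ) ∈ 𝔻 := mem_disc.2 (by simp)
  have hLF : DifferentiableOn ℂ (⇑L ∘ F) 𝔻 := L.differentiable.comp_differentiableOn hFd
  have hLF0 : (⇑L ∘ F) 0 = 0 := by simp [Function.comp, hF0]
  have hLFb : ∀ z ∈ 𝔻, ‖(⇑L ∘ F) z‖ ≤ c₀ := fun z hz => hLb _ (hFm z hz)
  have hDF0 : DifferentiableAt ℂ F 0 :=
    (hFd 0 h0D).differentiableAt (isOpen_ball.mem_nhds h0D)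
  have huH : ∀ t : ℂ, dslope (⇑L ∘ F) 0 t = L (dslope F 0 t) := fun t =>
    L.dslope_comp F 0 t (fun _ => hDF0)
  have hub : ∀ t ∈ 𝔻, ‖dslope (⇑L ∘ F) 0 t‖ ≤ c₀ := by
    intro t ht
    have := schwarz_bound one_pos hLF hLF0 hLFb ht
    rwa [div_one] at this
  have huσ : c₀ ≤ ‖dslope (⇑L ∘ F) 0 σ‖ := by
    rw [huH σ]
    exact hLre.trans (re_le_norm _)
  have hud : DifferentiableOn ℂ (dslope (⇑L ∘ F) 0) 𝔻 := dslope_diffOn isOpen_ball h0D hLF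
  have hconst := const_of_max hud hub hσD huσ
  -- kill using the interpolant G₀
  obtain ⟨r, hr1, hrU₀⟩ := exists_radius hU₀o hU₀c
  have hvGd : DifferentiableOn ℂ (⇑L ∘ G₀) (ball (0:ℂ) r) :=
    L.differentiable.comp_differentiableOn (hG₀d.mono hrU₀)
  have hvG0 : (⇑L ∘ G₀) 0 = 0 := by simp [Function.comp, hG₀0]
  have hvGb : ∀ z ∈ ball (0:ℂ) r, ‖(⇑L ∘ G₀) z‖ ≤ c₀ := fun z hz => hLb _ (hG₀m z (hrU₀ hz))
  have hτr : τ ∈ ball (0:ℂ) r := mem_ball_zero_iff.2 (lt_trans (mem_disc.1 hτD) hr1)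
  have hsch := schwarz_bound (lt_trans one_pos hr1) hvGd hvG0 hvGb hτr
  have hFτ : F τ = τ • dslope F 0 τ := by
    have h := sub_smul_dslope F 0 τ
    rw [sub_zero, hF0, sub_zero] at h
    exact h.symm
  have heq : dslope (⇑L ∘ G₀) 0 τ = dslope (⇑L ∘ F) 0 σ := by
    rw [dslope_of_ne _ hτne, slope_def_module, sub_zero, hvG0, sub_zero]
    show τ⁻¹ • L (G₀ τ) = _
    rw [hG₀τ, hFτ, map_smul, smul_smul, inv_mul_cancel₀ hτne, one_smul, ← huH τ,
      hconst τ hτD]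
  rw [heq] at hsch
  have h2 : c₀ / r < c₀ := div_lt_self hc₀ hr1
  linarith [huσ.trans hsch]


theorem key {n : ℕ} {R : Set (Fin n → ℂ)} (hRo : IsOpen R) (hconv : Convex ℝ R)
    (hbal : Balanced ℂ R) (hhom : Homogeneous R) :
    ∀ (k : ℕ) (f : ℂ → Fin n → ℂ) (lam : Fin (k+1) → ℂ),
      Function.Injective lam → (∀ j, lam j ∈ 𝔻) →
      DifferentiableOn ℂ f 𝔻 → (∀ z ∈ 𝔻, f z ∈ R) →
      ¬ Solv R lam (fun j => f (lam j)) →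
      ∀ mu : Fin (k+1) → ℂ, Function.Injective mu → (∀ j, mu j ∈ 𝔻) →
        ¬ Solv R mu (fun j => f (mu j)) := by
  intro k
  induction k with
  | zero =>
    intro f lam _ hmem _ hfm hfe mu _ _
    exfalso
    apply hfe
    refine ⟨Set.univ, fun _ => f (lam 0), isOpen_univ, subset_univ _, differentiableOn_const _,
      fun z _ => hfm _ (hmem 0), fun j => ?_⟩
    have hj : j = 0 := Fin.ext (by omega)
    rw [hj]
  | succ k ih =>
    intro f lam hinj hmem hfd hfm hfe
    have h0D : (0:ℂ) ∈ 𝔻 := mem_disc.2 (by simp)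
    have h0R : (0 : Fin n → ℂ) ∈ R := zero_mem_of_balanced hbal (hfm 0 h0D)
    -- core: replacement when the target shares the node at position `0`
    have main : ∀ (lam : Fin (k+1+1) → ℂ), Function.Injective lam → (∀ j, lam j ∈ 𝔻) →
        ¬ Solv R lam (fun j => f (lam j)) →
        ∀ mu : Fin (k+1+1) → ℂ, Function.Injective mu → (∀ j, mu j ∈ 𝔻) → mu 0 = lam 0 →
        ¬ Solv R mu (fun j => f (mu j)) := by
      clear hfe hinj hmem lam
      intro lam hinj hmem hfe mu hμinj hμmem hsh hsolv
      set α : ℂ := lam 0 with hα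
      have hαD : ‖α‖ < 1 := mem_disc.1 (hmem 0)
      obtain ⟨Φ, ⟨hΦd, hΦm, Ψ, hΨd, hΨm, hΨΦ, hΦΨ⟩, hΦα⟩ :=
        hhom (f α) (hfm α (hmem 0)) 0 h0R
      have hmobmem : ∀ z ∈ 𝔻, mob α z ∈ 𝔻 := fun z hz =>
        mem_disc.2 (mob_norm_lt hαD (mem_disc.1 hz))
      have hmobdiff : DifferentiableOn ℂ (mob α) 𝔻 :=
        (mob_differentiableOn α).mono (fun z hz => mob_den_ne hαD (mem_disc.1 hz).le)
      -- normalized map and nodes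
      set F : ℂ → Fin n → ℂ := fun z => Φ (f (mob α z)) with hF
      set tl : Fin (k+1+1) → ℂ := fun j => mob α (lam j) with htl
      set xi : Fin (k+1+1) → ℂ := fun j => mob α (mu j) with hxi
      have htlmem : ∀ j, tl j ∈ 𝔻 := fun j => hmobmem _ (hmem j)
      have hximem : ∀ j, xi j ∈ 𝔻 := fun j => hmobmem _ (hμmem j)
      have htl0 : tl 0 = 0 := by rw [htl]; simp only [← hα, mob_self]
      have hxi0 : xi 0 = 0 := by rw [hxi]; simp only [hsh, ← hα, mob_self]
      have htlinj : Function.Injective tl := fun a b hab =>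
        hinj (mob_inj hαD (mem_disc.1 (hmem a)).le (mem_disc.1 (hmem b)).le hab)
      have hxiinj : Function.Injective xi := fun a b hab =>
        hμinj (mob_inj hαD (mem_disc.1 (hμmem a)).le (mem_disc.1 (hμmem b)).le hab)
      have hFd : DifferentiableOn ℂ F 𝔻 := by
        have h1 : DifferentiableOn ℂ (fun z => f (mob α z)) 𝔻 :=
          hfd.comp hmobdiff (fun z hz => hmobmem z hz)
        exact hΦd.comp h1 (fun z hz => hfm _ (hmobmem z hz))
      have hFm : ∀ z ∈ 𝔻, F z ∈ R := fun z hz => hΦm (hfm _ (hmobmem z hz))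
      have hF0 : F 0 = 0 := by
        rw [hF]
        simp only [mob_zero]
        exact hΦα
      have hmobmob : ∀ z ∈ 𝔻, mob α (mob α z) = z := fun z hz =>
        mob_mob hαD (mem_disc.1 hz).le
      -- weak extremality transfers to F at the nodes tl
      have hFe : ¬ Solv R tl (fun j => F (tl j)) := by
        intro hS
        apply hfe
        have h1 := solv_mob hαD (fun j => mem_disc.1 (htlmem j)) hS
        have h2 := solv_post hΨd hΨm h1
        refine solv_congr (fun j => ?_) (fun j => ?_) h2
        · exact hmobmob _ (hmem j)
        · show Ψ (F (tl j)) = f (lam j)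
          rw [hF]
          simp only
          rw [htl]
          simp only
          rw [hmobmob _ (hmem j)]
          exact hΨΦ _ (hfm _ (hmem j))
      -- the assumed interpolant transfers to F at the nodes xi
      have hSxi : Solv R xi (fun j => F (xi j)) := by
        have h1 := solv_mob hαD (fun j => mem_disc.1 (hμmem j)) hsolv
        have h2 := solv_post hΦd hΦm h1
        refine solv_congr (fun j => rfl) (fun j => ?_) h2
        show Φ (f (mu j)) = F (xi j)
        rw [hF]
        simp only
        rw [hxi]
        simp only
        rw [hmobmob _ (hμmem j)]
      by_cases hcase : ∀ σ ∈ 𝔻, dslope F 0 σ ∈ R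
      · -- Case B : descend to a problem with one node fewer
        have hHd : DifferentiableOn ℂ (dslope F 0) 𝔻 := dslope_diffOn isOpen_ball h0D hFd
        have hFH : ∀ z : ℂ, F z = z • dslope F 0 z := by
          intro z
          have h := sub_smul_dslope F 0 z
          rw [sub_zero, hF0, sub_zero] at h
          exact h.symm
        have htl1inj : Function.Injective (fun j : Fin (k+1) => tl j.succ) :=
          fun a b hab => Fin.succ_injective _ (htlinj hab)
        have htl1mem : ∀ j : Fin (k+1), tl j.succ ∈ 𝔻 := fun j => htlmem _
        have hHe : ¬ Solv R (fun j : Fin (k+1) => tl j.succ)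
            (fun j => dslope F 0 (tl j.succ)) := by
          intro hS
          apply hFe
          refine solv_extend_zero hRo hbal hS (fun i hi => ?_) (fun i => mem_disc.1 (htlmem i))
            (fun i hi => ?_)
          · show F (tl i) = 0
            rw [hi, hF0]
          · have hine : i ≠ 0 := by
              intro h
              rw [h, htl0] at hi
              exact hi rfl
            obtain ⟨j, rfl⟩ := Fin.eq_succ_of_ne_zero hine
            exact ⟨j, rfl, hFH (tl j.succ)⟩
        have hHfull := ih (dslope F 0) (fun j : Fin (k+1) => tl j.succ) htl1inj htl1mem hHd
          (fun z hz => hcase z hz) hHe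
        have hxi1inj : Function.Injective (fun j : Fin (k+1) => xi j.succ) :=
          fun a b hab => Fin.succ_injective _ (hxiinj hab)
        have hxi1mem : ∀ j : Fin (k+1), xi j.succ ∈ 𝔻 := fun j => hximem _
        apply hHfull (fun j : Fin (k+1) => xi j.succ) hxi1inj hxi1mem
        refine solv_dslope hRo hconv hbal h0R hSxi (i₀ := 0) hxi0 ?_ ?_
        · show F (xi 0) = 0
          rw [hxi0, hF0]
        · intro j
          have hne : xi j.succ ≠ 0 := by
            intro h
            exact (Fin.succ_ne_zero j) (hxiinj (h.trans hxi0.symm))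
          refine ⟨hne, mem_disc.1 (hximem _), j.succ, rfl, ?_⟩
          rw [dslope_of_ne _ hne, slope_def_module, sub_zero, hF0, sub_zero]
      · -- Case A : rigidity kill
        push_neg at hcase
        obtain ⟨σ, hσD, hσR⟩ := hcase
        obtain ⟨U₀, G₀, hU₀o, hU₀c, hG₀d, hG₀m, hG₀v⟩ := hSxi
        have hG₀0 : G₀ 0 = 0 := by
          simpa only [hxi0, hF0] using hG₀v 0
        have hξ1ne : xi 1 ≠ 0 := by
          intro h
          have h10 : (1 : Fin (k+1+1)) = 0 := hxiinj (h.trans hxi0.symm)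
          exact one_ne_zero h10
        exact case_out hRo hconv hbal h0R hFd hFm hF0 hσD hσR hU₀o hU₀c hG₀d hG₀m
          (hximem 1) hξ1ne hG₀0 (hG₀v 1)
    -- now remove the shared-node restriction by permuting
    have repl : ∀ (lam : Fin (k+1+1) → ℂ), Function.Injective lam → (∀ j, lam j ∈ 𝔻) →
        ¬ Solv R lam (fun j => f (lam j)) →
        ∀ mu : Fin (k+1+1) → ℂ, Function.Injective mu → (∀ j, mu j ∈ 𝔻) →
        (∃ i₀ j₀, mu j₀ = lam i₀) →
        ¬ Solv R mu (fun j => f (mu j)) := by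
      clear hfe hinj hmem lam
      intro lam hinj hmem hfe mu hμinj hμmem hsh hsolv
      obtain ⟨i₀, j₀, hshare⟩ := hsh
      refine main (lam ∘ (Equiv.swap 0 i₀)) (hinj.comp (Equiv.swap 0 i₀).injective)
        (fun j => hmem _) ?_ (mu ∘ (Equiv.swap 0 j₀)) (hμinj.comp (Equiv.swap 0 j₀).injective)
        (fun j => hμmem _) ?_ ?_
      · intro h
        apply hfe
        have h2 := solv_reindex (⇑(Equiv.swap (0 : Fin (k+1+1)) i₀)) h
        refine solv_congr (fun j => ?_) (fun j => ?_) h2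
        · show lam (Equiv.swap 0 i₀ (Equiv.swap 0 i₀ j)) = lam j
          rw [Equiv.swap_apply_self]
        · show f (lam (Equiv.swap 0 i₀ (Equiv.swap 0 i₀ j))) = f (lam j)
          rw [Equiv.swap_apply_self]
      · show mu (Equiv.swap 0 j₀ 0) = lam (Equiv.swap 0 i₀ 0)
        rw [Equiv.swap_apply_left, Equiv.swap_apply_left, hshare]
      · exact solv_reindex (⇑(Equiv.swap (0 : Fin (k+1+1)) j₀)) hsolv
    -- chain through two auxiliary node tuples with fresh points
    intro mu hμinj hμmem
    have hIoo : ((fun x : ℝ => (x:ℂ)) '' Set.Ioo (0:ℝ) 1).Infinite :=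
      (Set.Ioo_infinite (by norm_num)).image
        (fun a _ b _ h => Complex.ofReal_injective h)
    have hTinf : (((fun x : ℝ => (x:ℂ)) '' Set.Ioo (0:ℝ) 1)
        \ (Set.range lam ∪ Set.range mu)).Infinite :=
      hIoo.diff ((Set.finite_range lam).union (Set.finite_range mu))
    set emb := Set.Infinite.natEmbedding _ hTinf with hemb
    set w : Fin (k+1) → ℂ := fun j => (emb (j : ℕ) : ℂ) with hw
    have hwinj : Function.Injective w := by
      intro a b hab
      have h1 : emb (a : ℕ) = emb (b : ℕ) := Subtype.ext hab
      have h2 : (a : ℕ) = (b : ℕ) := emb.injective h1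
      exact Fin.val_injective h2
    have hwprop : ∀ j, w j ∈ 𝔻 ∧ w j ∉ Set.range lam ∧ w j ∉ Set.range mu := by
      intro j
      obtain ⟨hin, hnot⟩ := (emb (j : ℕ)).2
      refine ⟨?_, fun h => hnot (Or.inl h), fun h => hnot (Or.inr h)⟩
      obtain ⟨x, hx, hxe⟩ := hin
      have hwj : w j = (x : ℂ) := by rw [hw]; exact hxe.symm
      rw [mem_disc, hwj, Complex.norm_real, Real.norm_eq_abs, _root_.abs_of_nonneg hx.1.le]
      exact hx.2
    have hc1inj : Function.Injective (Fin.cons (lam 0) w : Fin (k+1+1) → ℂ) := by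
      apply Fin.cons_injective_of_injective _ hwinj
      intro h
      obtain ⟨j, hj⟩ := h
      exact (hwprop j).2.1 (hj ▸ ⟨0, rfl⟩)
    have hc2inj : Function.Injective (Fin.cons (mu 0) w : Fin (k+1+1) → ℂ) := by
      apply Fin.cons_injective_of_injective _ hwinj
      intro h
      obtain ⟨j, hj⟩ := h
      exact (hwprop j).2.2 (hj ▸ ⟨0, rfl⟩)
    have hc1mem : ∀ j, (Fin.cons (lam 0) w : Fin (k+1+1) → ℂ) j ∈ 𝔻 := by
      intro j
      refine Fin.cases ?_ ?_ j
      · rw [Fin.cons_zero]; exact hmem 0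
      · intro i; rw [Fin.cons_succ]; exact (hwprop i).1
    have hc2mem : ∀ j, (Fin.cons (mu 0) w : Fin (k+1+1) → ℂ) j ∈ 𝔻 := by
      intro j
      refine Fin.cases ?_ ?_ j
      · rw [Fin.cons_zero]; exact hμmem 0
      · intro i; rw [Fin.cons_succ]; exact (hwprop i).1
    have step1 := repl lam hinj hmem hfe (Fin.cons (lam 0) w) hc1inj hc1mem
      ⟨0, 0, Fin.cons_zero (α := fun _ => ℂ) (lam 0) w⟩
    have key10 : (Fin.cons (lam 0) w : Fin (k+1+1) → ℂ) 1 = w 0 := by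
      rw [← Fin.succ_zero_eq_one, Fin.cons_succ]
    have key20 : (Fin.cons (mu 0) w : Fin (k+1+1) → ℂ) 1 = w 0 := by
      rw [← Fin.succ_zero_eq_one, Fin.cons_succ]
    have hfe1 : ¬ Solv R (Fin.cons (lam 0) w)
        (fun j => f ((Fin.cons (lam 0) w : Fin (k+1+1) → ℂ) j)) := step1
    have step2 := repl (Fin.cons (lam 0) w) hc1inj hc1mem hfe1 (Fin.cons (mu 0) w)
      hc2inj hc2mem ⟨1, 1, key20.trans key10.symm⟩
    exact repl (Fin.cons (mu 0) w) hc2inj hc2mem step2 mu hμinj hμmem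
      ⟨0, 0, (Fin.cons_zero (α := fun _ => ℂ) (mu 0) w).symm⟩


end Stmt6Aux

theorem stmt6 {n : ℕ} (R : Set (Fin n → ℂ)) (hRo : IsOpen R) (hRc : IsConnected R)
    (hbd : Bornology.IsBounded R) (hconv : Convex ℝ R) (hbal : Balanced ℂ R)
    (hhom : Homogeneous R)
    (m : ℕ) (hm : 2 ≤ m) (f : ℂ → Fin n → ℂ)
    (lam : Fin m → ℂ) (hinj : Function.Injective lam) (hmem : ∀ j, lam j ∈ 𝔻)
    (hf : IsWeakExtremal R lam f) :
    IsMExtremal R m f := by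
  obtain ⟨hfd, hfm, hfe⟩ := hf
  refine ⟨hfd, hfm, ?_⟩
  intro mu hμinj hμmem
  obtain ⟨k, rfl⟩ : ∃ k, m = k + 1 := ⟨m - 1, by omega⟩
  intro hS
  exact Stmt6Aux.key hRo hconv hbal hhom k f lam hinj hmem hfd hfm hfe mu hμinj hμmem hS

end
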